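/- For a definite nonnegative matrix A (λ(A) = 1), the set of subeigenvectors V*(A) = {x ∈ ℝ₊ⁿ : A⊗x ≤ x} equals the set of fixed points {x : A*⊗x = x} of the Kleene star A*. -/

import Mathlib

open Finset

/-- Max-times matrix product: `(A ⊗ B) i j = max_k (A i k * B k j)`. -/
noncomputable def mProd {n : ℕ} (A B : Matrix (Fin n) (Fin n) NNReal) :
    Matrix (Fin n) (Fin n) NNReal :=
  fun i j => univ.sup fun k => A i k * B k j

/-- Max-algebraic matrix powers, `mPow A 0 = I`. -/
noncomputable def mPow {n : ℕ} (A : Matrix (Fin n) (Fin n) NNReal) :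
    ℕ → Matrix (Fin n) (Fin n) NNReal
  | 0 => fun i j => if i = j then 1 else 0
  | k + 1 => mProd (mPow A k) A

/-- Kleene star `A* = I ⊕ A ⊕ ... ⊕ A^{n-1}` in max algebra. -/
noncomputable def klStar {n : ℕ} (A : Matrix (Fin n) (Fin n) NNReal) :
    Matrix (Fin n) (Fin n) NNReal :=
  fun i j => (Finset.range n).sup fun k => mPow A k i j

/-- Partial "sums" `I ⊕ A ⊕ ... ⊕ A^m` of the Kleene star series. -/
noncomputable def kPartial {n : ℕ} (A : Matrix (Fin n) (Fin n) NNReal) (m : ℕ) :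
    Matrix (Fin n) (Fin n) NNReal :=
  fun i j => (Finset.range (m + 1)).sup fun k => mPow A k i j

/-- The weight of the cycle given by the list `l` (with wrap-around edge). -/
def cycleWeight {n : ℕ} (A : Matrix (Fin n) (Fin n) NNReal) (l : List (Fin n)) : NNReal :=
  ((l.zip (l.rotate 1)).map fun p => A p.1 p.2).prod

/-- The geometric mean of a cycle: `w(σ,A)^{1/k}`. -/
noncomputable def cycleMean {n : ℕ} (A : Matrix (Fin n) (Fin n) NNReal) (l : List (Fin n)) :
    NNReal :=
  (cycleWeight A l) ^ ((l.length : ℝ)⁻¹)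

/-- The maximum cycle geometric mean `λ(A)`. -/
noncomputable def maxCycleMean {n : ℕ} (A : Matrix (Fin n) (Fin n) NNReal) : NNReal :=
  sSup {x | ∃ l : List (Fin n), l ≠ [] ∧ x = cycleMean A l}

/-- `(i,j)` is a critical edge: it lies on a cycle attaining `λ(A)`. -/
def criticalEdge {n : ℕ} (A : Matrix (Fin n) (Fin n) NNReal) (i j : Fin n) : Prop :=
  ∃ l : List (Fin n), l ≠ [] ∧ cycleMean A l = maxCycleMean A ∧ (i, j) ∈ l.zip (l.rotate 1)

/-- Max-algebraic matrix-vector product. -/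
noncomputable def mVec {n : ℕ} (A : Matrix (Fin n) (Fin n) NNReal) (x : Fin n → NNReal) :
    Fin n → NNReal :=
  fun i => univ.sup fun j => A i j * x j

lemma nn_mul_sup (c x y : NNReal) : c * (x ⊔ y) = c * x ⊔ c * y := by
  rcases le_total x y with h | h
  · rw [sup_eq_right.2 h, sup_eq_right.2 (mul_le_mul_right h c)]
  · rw [sup_eq_left.2 h, sup_eq_left.2 (mul_le_mul_right h c)]

lemma nn_sup_mul (c x y : NNReal) : (x ⊔ y) * c = x * c ⊔ y * c := by
  rw [mul_comm, nn_mul_sup, mul_comm, mul_comm c y]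

lemma mul_finsup {α : Type*} (s : Finset α) (f : α → NNReal) (c : NNReal) :
    c * s.sup f = s.sup fun a => c * f a :=
  Finset.comp_sup_eq_sup_comp (c * ·) (nn_mul_sup c) (mul_zero c)

lemma finsup_mul {α : Type*} (s : Finset α) (f : α → NNReal) (c : NNReal) :
    s.sup f * c = s.sup fun a => f a * c :=
  Finset.comp_sup_eq_sup_comp (· * c) (fun x y => nn_sup_mul c x y) (zero_mul c)

lemma mProd_assoc {n : ℕ} (A B C : Matrix (Fin n) (Fin n) NNReal) :
    mProd (mProd A B) C = mProd A (mProd B C) := by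
  funext i j
  simp only [mProd, finsup_mul, mul_finsup]
  rw [Finset.sup_comm]
  simp [mul_assoc]

lemma mProd_one_left {n : ℕ} (A : Matrix (Fin n) (Fin n) NNReal) :
    mProd (mPow A 0) A = A := by
  funext i j
  apply le_antisymm
  · exact Finset.sup_le fun k _ => by
      simp only [mPow]
      split
      · subst ‹i = k›; simp
      · simp
  · have := Finset.le_sup (f := fun k => mPow A 0 i k * A k j) (mem_univ i)
    simpa [mProd, mPow] using this

lemma mProd_one_right {n : ℕ} (A : Matrix (Fin n) (Fin n) NNReal) :
    mProd A (mPow A 0) = A := by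
  funext i j
  apply le_antisymm
  · exact Finset.sup_le fun k _ => by
      simp only [mPow]
      split
      · subst ‹k = j›; simp
      · simp
  · have := Finset.le_sup (f := fun k => A i k * mPow A 0 k j) (mem_univ j)
    simpa [mProd, mPow] using this

lemma mPow_succ_left {n : ℕ} (A : Matrix (Fin n) (Fin n) NNReal) (k : ℕ) :
    mPow A (k + 1) = mProd A (mPow A k) := by
  induction k with
  | zero => show mProd (mPow A 0) A = mProd A (mPow A 0); rw [mProd_one_left, mProd_one_right]
  | succ k ih =>
      have h2 : mPow A (k+2) = mProd (mPow A (k+1)) A := rfl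
      rw [h2, ih, mProd_assoc]; exact congrArg (mProd A) ih

/-- Weight of the walk through the vertex list `l`. -/
def wW {n : ℕ} (A : Matrix (Fin n) (Fin n) NNReal) : List (Fin n) → NNReal
  | [] => 1
  | [_] => 1
  | a :: b :: t => A a b * wW A (b :: t)

lemma wW_append {n : ℕ} (A : Matrix (Fin n) (Fin n) NNReal) (s t : List (Fin n)) (a : Fin n) :
    wW A (s ++ a :: t) = wW A (s ++ [a]) * wW A (a :: t) := by
  induction s with
  | nil => simp [wW]
  | cons x s ih =>
      cases s with
      | nil => cases t with
        | nil => simp [wW]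
        | cons b t' => simp [wW, mul_assoc]
      | cons y s' =>
          have : (x :: y :: s') ++ a :: t = x :: (y :: s' ++ a :: t) := rfl
          rw [this]
          show A x y * wW A (y :: s' ++ a :: t) = wW A ((x :: y :: s') ++ [a]) * wW A (a :: t)
          rw [ih]
          show A x y * (wW A (y :: s' ++ [a]) * wW A (a :: t))
            = (A x y * wW A (y :: s' ++ [a])) * wW A (a :: t)
          rw [mul_assoc]

lemma zip_wW {n : ℕ} (A : Matrix (Fin n) (Fin n) NNReal) :
    ∀ (w : List (Fin n)) (a c : Fin n),
      (((a :: w).zip (w ++ [c])).map fun p => A p.1 p.2).prod = wW A (a :: (w ++ [c]))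
  | [], a, c => by simp [wW]
  | b :: w', a, c => by
      have h1 : ((a :: b :: w').zip ((b :: w') ++ [c])) = (a, b) :: ((b :: w').zip (w' ++ [c])) := rfl
      rw [h1, List.map_cons, List.prod_cons, zip_wW A w' b c]
      rfl

lemma cycleWeight_eq_wW {n : ℕ} (A : Matrix (Fin n) (Fin n) NNReal) (a : Fin n)
    (w : List (Fin n)) : cycleWeight A (a :: w) = wW A (a :: (w ++ [a])) := by
  rw [cycleWeight, List.rotate_cons_succ, List.rotate_zero, zip_wW]

lemma wW_le {n : ℕ} (A : Matrix (Fin n) (Fin n) NNReal) :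
    ∀ (t : List (Fin n)) (a : Fin n),
      wW A (a :: t) ≤ mPow A t.length a ((a :: t).getLast (List.cons_ne_nil a t))
  | [], a => by simp [wW, mPow]
  | b :: t', a => by
      have hlast : ((a :: b :: t').getLast (List.cons_ne_nil a _))
          = ((b :: t').getLast (List.cons_ne_nil b t')) := List.getLast_cons _
      have h1 : wW A (a :: b :: t') = A a b * wW A (b :: t') := rfl
      have h2 := wW_le A t' b
      calc wW A (a :: b :: t')
          ≤ A a b * mPow A t'.length b ((b :: t').getLast (List.cons_ne_nil b t')) := by
            rw [h1]; exact mul_le_mul_right h2 _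
        _ ≤ mPow A (t'.length + 1) a ((b :: t').getLast (List.cons_ne_nil b t')) := by
            rw [mPow_succ_left]
            exact Finset.le_sup (f := fun m => A a m * mPow A t'.length m _) (mem_univ b)
        _ = mPow A (b :: t').length a ((a :: b :: t').getLast (List.cons_ne_nil a _)) := by
            rw [hlast]; rfl

lemma exists_walk {n : ℕ} (A : Matrix (Fin n) (Fin n) NNReal) :
    ∀ (p : ℕ) (i j : Fin n), mPow A p i j = 0 ∨
      ∃ t : List (Fin n), t.length = p ∧
        (i :: t).getLast (List.cons_ne_nil i t) = j ∧ mPow A p i j ≤ wW A (i :: t) := by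
  intro p
  induction p with
  | zero =>
      intro i j
      by_cases h : i = j
      · subst h
        exact Or.inr ⟨[], rfl, by simp, by simp [mPow, wW]⟩
      · exact Or.inl (by simp [mPow, h])
  | succ p ih =>
      intro i j
      have hne : (univ : Finset (Fin n)).Nonempty := ⟨i, mem_univ i⟩
      obtain ⟨m, -, hm⟩ := Finset.exists_mem_eq_sup univ hne
        (fun m => mPow A p i m * A m j)
      have hentry : mPow A (p + 1) i j = mPow A p i m * A m j := hm
      rcases ih i m with h0 | ⟨t, hlen, hlast, hle⟩
      · exact Or.inl (by rw [hentry, h0, zero_mul])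
      · refine Or.inr ⟨t ++ [j], by simp [hlen], ?_, ?_⟩
        · show ((i :: t) ++ [j]).getLast (by simp) = j
          simp [List.getLast_append]
        · have hd : (i :: t).dropLast ++ [m] = i :: t := by
            conv_lhs => rw [← hlast]
            exact List.dropLast_append_getLast _
          have h2 : i :: (t ++ [j]) = (i :: t).dropLast ++ m :: [j] := by
            rw [show (i :: t).dropLast ++ m :: [j] = ((i :: t).dropLast ++ [m]) ++ [j]
              by simp, hd]
            rfl
          rw [h2, wW_append, hd]
          have : wW A [m, j] = A m j := by simp [wW]
          rw [this, hentry]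
          exact mul_le_mul_left hle _

lemma getLast_append'' {α : Type*} (u v : List α) (hv : v ≠ []) (h : u ++ v ≠ []) :
    (u ++ v).getLast h = v.getLast hv := by
  rw [List.getLast_append]
  simp [hv]

lemma cycleWeight_le_one {n : ℕ} {A : Matrix (Fin n) (Fin n) NNReal}
    (hdef : maxCycleMean A = 1) {l : List (Fin n)} (hl : l ≠ []) :
    cycleWeight A l ≤ 1 := by
  have hb : BddAbove {x | ∃ l : List (Fin n), l ≠ [] ∧ x = cycleMean A l} := by
    by_contra hb
    have := csSup_of_not_bddAbove (α := NNReal) hb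
    rw [maxCycleMean] at hdef
    rw [this] at hdef
    simp at hdef
  have hmean : cycleMean A l ≤ 1 := by
    rw [← hdef, maxCycleMean]
    exact le_csSup hb ⟨l, hl, rfl⟩
  have hk : ((l.length : ℝ)⁻¹) * (l.length : ℝ) = 1 := by
    have : (l.length : ℝ) ≠ 0 := by
      simp [List.length_eq_zero_iff]
      exact hl
    field_simp
  have hw : (cycleMean A l) ^ ((l.length : ℝ)) = cycleWeight A l := by
    rw [cycleMean, ← NNReal.rpow_mul, hk, NNReal.rpow_one]
  rw [← hw]
  calc (cycleMean A l) ^ ((l.length : ℝ)) ≤ (1 : NNReal) ^ ((l.length : ℝ)) :=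
        NNReal.rpow_le_rpow hmean (by positivity)
    _ = 1 := NNReal.one_rpow _

lemma dup_split {α : Type*} : ∀ (l : List α), ¬ l.Nodup →
    ∃ (s : List α) (x : α) (w z : List α), l = s ++ x :: (w ++ x :: z)
  | [], h => absurd List.nodup_nil h
  | a :: l, h => by
      by_cases ha : a ∈ l
      · obtain ⟨w, z, rfl⟩ := List.append_of_mem ha
        exact ⟨[], a, w, z, rfl⟩
      · have : ¬ l.Nodup := fun hn => h (List.nodup_cons.2 ⟨ha, hn⟩)
        obtain ⟨s, x, w, z, rfl⟩ := dup_split l this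
        exact ⟨a :: s, x, w, z, rfl⟩

lemma getLast_of_eq_append {α : Type*} {l u v : List α} (heq : l = u ++ v) (hv : v ≠ [])
    (h : l ≠ []) : l.getLast h = v.getLast hv := by
  subst heq
  exact getLast_append'' u v hv h

lemma pow_le_star {n : ℕ} {A : Matrix (Fin n) (Fin n) NNReal}
    (hdef : maxCycleMean A = 1) (p : ℕ) : ∀ i j, mPow A p i j ≤ klStar A i j := by
  induction p using Nat.strong_induction_on with
  | _ p ih =>
  intro i j
  by_cases hp : p < n
  · exact Finset.le_sup (f := fun k => mPow A k i j) (mem_range.2 hp)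
  · rcases exists_walk A p i j with h0 | ⟨t, hlen, hlast, hle⟩
    · rw [h0]; exact zero_le
    · -- the vertex list i :: t is too long to be nodup
      have hnd : ¬ (i :: t).Nodup := by
        intro hnd
        have := hnd.length_le_card
        simp only [List.length_cons, hlen, Fintype.card_fin] at this
        omega
      obtain ⟨s, x, w, z, hV⟩ := dup_split _ hnd
      -- weight comparison
      have hcyc : wW A ((x :: w) ++ [x]) ≤ 1 := by
        rw [show (x :: w) ++ [x] = x :: (w ++ [x]) from rfl, ← cycleWeight_eq_wW]
        exact cycleWeight_le_one hdef (List.cons_ne_nil x w)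
      have hw1 : wW A (i :: t) = wW A (s ++ [x]) * (wW A ((x :: w) ++ [x]) * wW A (x :: z)) := by
        rw [hV, wW_append]
        congr 1
        rw [show x :: (w ++ x :: z) = (x :: w) ++ x :: z from rfl, wW_append]
      have hsplit : wW A (s ++ x :: z) = wW A (s ++ [x]) * wW A (x :: z) := wW_append A s z x
      have hle2 : wW A (i :: t) ≤ wW A (s ++ x :: z) := by
        rw [hw1, hsplit]
        calc wW A (s ++ [x]) * (wW A ((x :: w) ++ [x]) * wW A (x :: z))
            ≤ wW A (s ++ [x]) * (1 * wW A (x :: z)) :=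
              mul_le_mul_right (mul_le_mul_left hcyc _) _
          _ = wW A (s ++ [x]) * wW A (x :: z) := by rw [one_mul]
      have hlastV : (i :: t).getLast (List.cons_ne_nil i t) = (x :: z).getLast (List.cons_ne_nil x z) :=
        getLast_of_eq_append (u := s ++ x :: w) (by rw [hV]; simp) (List.cons_ne_nil x z) _
      have hlastj : (x :: z).getLast (List.cons_ne_nil x z) = j := by rw [← hlastV, hlast]
      -- write s ++ x :: z as i :: t' with t' shorter than t
      obtain ⟨t', ht'eq, ht'len⟩ : ∃ t' : List (Fin n), s ++ x :: z = i :: t' ∧ t'.length < p := by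
        cases s with
        | nil =>
            have hi : i = x := (List.cons_eq_cons.mp (hV.trans (List.nil_append _))).1
            refine ⟨z, by rw [hi]; rfl, ?_⟩
            have := congrArg List.length hV
            simp at this
            omega
        | cons c s' =>
            have hi : i = c := (List.cons_eq_cons.mp hV).1
            refine ⟨s' ++ x :: z, by rw [hi]; rfl, ?_⟩
            have := congrArg List.length hV
            simp at this
            simp
            omega
      have hlast' : (i :: t').getLast (List.cons_ne_nil i t') = j := by
        rw [show (i :: t').getLast (List.cons_ne_nil i t')
              = (s ++ x :: z).getLast (by rw [ht'eq]; exact List.cons_ne_nil i t')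
            from by congr 1; rw [ht'eq],
          getLast_of_eq_append rfl (List.cons_ne_nil x z), hlastj]
      calc mPow A p i j ≤ wW A (i :: t) := hle
        _ ≤ wW A (s ++ x :: z) := hle2
        _ = wW A (i :: t') := by rw [ht'eq]
        _ ≤ mPow A t'.length i ((i :: t').getLast (List.cons_ne_nil i t')) := wW_le A t' i
        _ = mPow A t'.length i j := by rw [hlast']
        _ ≤ klStar A i j := ih t'.length ht'len i j

lemma mVec_mProd {n : ℕ} (B C : Matrix (Fin n) (Fin n) NNReal) (x : Fin n → NNReal) :
    mVec (mProd B C) x = mVec B (mVec C x) := by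
  funext i
  simp only [mVec, mProd, finsup_mul, mul_finsup]
  rw [Finset.sup_comm]
  simp [mul_assoc]

lemma mVec_one {n : ℕ} (A : Matrix (Fin n) (Fin n) NNReal) (x : Fin n → NNReal) :
    mVec (mPow A 0) x = x := by
  funext i
  apply le_antisymm
  · refine Finset.sup_le fun j _ => ?_
    simp only [mPow]
    split
    · subst ‹i = j›; simp
    · simp
  · have := Finset.le_sup (f := fun j => mPow A 0 i j * x j) (mem_univ i)
    simpa [mVec, mPow] using this

lemma mVec_klStar_eq {n : ℕ} (A : Matrix (Fin n) (Fin n) NNReal) (x : Fin n → NNReal)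
    (i : Fin n) :
    mVec (klStar A) x i = (Finset.range n).sup fun k => mVec (mPow A k) x i := by
  simp only [mVec, klStar, finsup_mul]
  rw [Finset.sup_comm]

/-- for definite `A`, subeigenvectors of `A` are exactly
the fixed points of `A*`. -/
theorem stmt_3 {n : ℕ} (A : Matrix (Fin n) (Fin n) NNReal)
    (hdef : maxCycleMean A = 1) :
    {x : Fin n → NNReal | ∀ i, mVec A x i ≤ x i} =
      {x : Fin n → NNReal | mVec (klStar A) x = x} := by
  ext x
  simp only [Set.mem_setOf_eq]
  constructor
  · intro h
    have hk : ∀ k i, mVec (mPow A k) x i ≤ x i := by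
      intro k
      induction k with
      | zero => intro i; rw [mVec_one]
      | succ k ih =>
          intro i
          have he : mVec (mPow A (k + 1)) x = mVec (mPow A k) (mVec A x) := by
            rw [show mPow A (k + 1) = mProd (mPow A k) A from rfl, mVec_mProd]
          rw [he]
          refine le_trans ?_ (ih i)
          exact Finset.sup_mono_fun fun j _ => mul_le_mul_right (h j) _
    funext i
    apply le_antisymm
    · rw [mVec_klStar_eq]
      exact Finset.sup_le fun k _ => hk k i
    · rw [mVec_klStar_eq]
      refine le_trans ?_ (Finset.le_sup (f := fun k => mVec (mPow A k) x i)
        (mem_range.2 i.pos))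
      exact le_of_eq (congrFun (mVec_one A x) i).symm
  · intro h i
    conv_rhs => rw [← h]
    refine Finset.sup_le fun jj _ => ?_
    conv_lhs => rw [show x jj = mVec (klStar A) x jj from (congrFun h jj).symm]
    rw [show mVec (klStar A) x jj = univ.sup fun m => klStar A jj m * x m from rfl, mul_finsup]
    refine Finset.sup_le fun m _ => ?_
    have key : A i jj * klStar A jj m ≤ klStar A i m := by
      rw [show klStar A jj m = (Finset.range n).sup fun k => mPow A k jj m from rfl, mul_finsup]
      refine Finset.sup_le fun k _ => ?_
      calc A i jj * mPow A k jj m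
          ≤ mPow A (k + 1) i m := by
            rw [mPow_succ_left]
            exact Finset.le_sup (f := fun q => A i q * mPow A k q m) (mem_univ jj)
        _ ≤ klStar A i m := pow_le_star hdef (k + 1) i m
    calc A i jj * (klStar A jj m * x m) = (A i jj * klStar A jj m) * x m := by ring
      _ ≤ klStar A i m * x m := mul_le_mul_left key _
      _ ≤ univ.sup fun q => klStar A i q * x q :=
          Finset.le_sup (f := fun q => klStar A i q * x q) (mem_univ m)
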